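/- Let R = ℚ[x,y,z] and I = (x²y, x²z, xy², xyz²). A polynomial f ∈ R lies in I if and only if: f vanishes on V(x) (i.e., f ∈ (x)), f vanishes on V(y,z) (i.e., f ∈ (y,z)), ∂f/∂x ∈ (x,y), and both ∂²f/∂x∂y and ∂³f/∂x∂y∂z lie in (x,y,z). -/

import Mathlib

open MvPolynomial

private lemma coeff_pderiv' {σ R : Type*} [CommSemiring R] [DecidableEq σ] (i : σ) (m : σ →₀ ℕ)
    (f : MvPolynomial σ R) :
    coeff m (pderiv i f) = (m i + 1) * coeff (m + Finsupp.single i 1) f := by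
  induction f using MvPolynomial.induction_on' with
  | monomial s a =>
      rw [pderiv_monomial, coeff_monomial, coeff_monomial]
      rcases Nat.eq_zero_or_pos (s i) with h | h
      · have hne : s ≠ m + Finsupp.single i 1 := by
          intro hs; apply absurd h
          simp [hs]
        simp [hne, h]
      · have : s - Finsupp.single i 1 = m ↔ s = m + Finsupp.single i 1 := by
          constructor
          · intro hs
            ext j
            by_cases hj : j = i
            · subst hj
              have := congrArg (fun g => g j) hs
              simp [Finsupp.tsub_apply] at this
              simp [← this]
              omega
            · have hj' : ¬ i = j := fun h => hj h.symm
              have := congrArg (fun g => g j) hs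
              simp [Finsupp.tsub_apply, Finsupp.single_apply, hj'] at this ⊢
              omega
          · intro hs; subst hs; ext j
            by_cases hj : j = i <;> simp [Finsupp.tsub_apply, Finsupp.single_apply, hj]
        rcases eq_or_ne s (m + Finsupp.single i 1) with hs | hs
        · simp [this.mpr hs, hs, mul_comm]
        · simp [hs, (not_congr this).mpr hs]
  | add p q hp hq => simp [map_add, hp, hq, mul_add]

private noncomputable def ee (i : Fin 3) (n : ℕ) : Fin 3 →₀ ℕ := Finsupp.single i n

/-- in `R = ℚ[x,y,z]` with `I = (x²y, x²z, xy², xyz²)`, a polynomial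
`f` lies in `I` if and only if `f ∈ (x)`, `f ∈ (y,z)`, `∂f/∂x ∈ (x,y)`, and both
`∂²f/∂x∂y` and `∂³f/∂x∂y∂z` lie in `(x,y,z)`. -/
theorem differential_membership_example :
    let R := MvPolynomial (Fin 3) ℚ
    let x : R := MvPolynomial.X 0
    let y : R := MvPolynomial.X 1
    let z : R := MvPolynomial.X 2
    let I : Ideal R := Ideal.span {x^2*y, x^2*z, x*y^2, x*y*z^2}
    ∀ f : R,
      f ∈ I ↔
        f ∈ Ideal.span {x} ∧
        f ∈ Ideal.span {y, z} ∧
        MvPolynomial.pderiv 0 f ∈ Ideal.span {x, y} ∧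
        MvPolynomial.pderiv 1 (MvPolynomial.pderiv 0 f) ∈ Ideal.span {x, y, z} ∧
        MvPolynomial.pderiv 2 (MvPolynomial.pderiv 1 (MvPolynomial.pderiv 0 f))
          ∈ Ideal.span {x, y, z} := by
  intro R x y z I f
  -- the generating set of I as monomials
  have hm1 : x^2*y = monomial (ee 0 2 + ee 1 1) (1:ℚ) := by
    rw [show x = X 0 from rfl, show y = X 1 from rfl, X_pow_eq_monomial,
      show (X 1 : R) = X 1 ^ 1 by ring, X_pow_eq_monomial, monomial_mul, one_mul]; rfl
  have hm2 : x^2*z = monomial (ee 0 2 + ee 2 1) (1:ℚ) := by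
    rw [show x = X 0 from rfl, show z = X 2 from rfl, X_pow_eq_monomial,
      show (X 2 : R) = X 2 ^ 1 by ring, X_pow_eq_monomial, monomial_mul, one_mul]; rfl
  have hm3 : x*y^2 = monomial (ee 0 1 + ee 1 2) (1:ℚ) := by
    rw [show x = X 0 from rfl, show y = X 1 from rfl,
      show (X 0 : R) = X 0 ^ 1 by ring, X_pow_eq_monomial, X_pow_eq_monomial,
      monomial_mul, one_mul]; rfl
  have hm4 : x*y*z^2 = monomial (ee 0 1 + ee 1 1 + ee 2 2) (1:ℚ) := by
    rw [show x = X 0 from rfl, show y = X 1 from rfl, show z = X 2 from rfl,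
      show (X 0 : R) = X 0 ^ 1 by ring, show (X 1 : R) = X 1 ^ 1 by ring,
      X_pow_eq_monomial, X_pow_eq_monomial, X_pow_eq_monomial,
      monomial_mul, monomial_mul, one_mul, one_mul]; rfl
  have hIset : ({x^2*y, x^2*z, x*y^2, x*y*z^2} : Set R) =
      (fun s => monomial s (1:ℚ)) ''
        {ee 0 2 + ee 1 1, ee 0 2 + ee 2 1, ee 0 1 + ee 1 2, ee 0 1 + ee 1 1 + ee 2 2} := by
    rw [Set.image_insert_eq, Set.image_insert_eq, Set.image_insert_eq, Set.image_singleton,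
      hm1, hm2, hm3, hm4]
  have hI : f ∈ I ↔ ∀ m ∈ f.support,
      ∃ si ∈ ({ee 0 2 + ee 1 1, ee 0 2 + ee 2 1, ee 0 1 + ee 1 2,
        ee 0 1 + ee 1 1 + ee 2 2} : Set (Fin 3 →₀ ℕ)), si ≤ m := by
    rw [show I = Ideal.span {x^2*y, x^2*z, x*y^2, x*y*z^2} from rfl, hIset,
      mem_ideal_span_monomial_image]
  -- condition 1 : f ∈ (x)
  have h1 : f ∈ Ideal.span {x} ↔ ∀ m ∈ f.support, m 0 ≠ 0 := by
    rw [show ({x} : Set R) = X '' {0} by simp; rfl, mem_ideal_span_X_image]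
    simp
  -- condition 2 : f ∈ (y, z)
  have h2 : f ∈ Ideal.span {y, z} ↔ ∀ m ∈ f.support, m 1 ≠ 0 ∨ m 2 ≠ 0 := by
    rw [show ({y, z} : Set R) = X '' {1, 2} by simp [Set.image_insert_eq]; rfl,
      mem_ideal_span_X_image]
    simp
  -- key coefficient computations
  have key3 : ∀ c, coeff (ee 2 c) (pderiv 0 f) = coeff (ee 0 1 + ee 2 c) f := by
    intro c
    rw [coeff_pderiv']
    have : (ee 2 c) 0 = 0 := by simp [ee, Finsupp.single_apply]
    rw [this, show ee 2 c + Finsupp.single 0 1 = ee 0 1 + ee 2 c by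
      rw [add_comm]; rfl]
    ring
  have key4 : coeff 0 (pderiv 1 (pderiv 0 f)) = coeff (ee 0 1 + ee 1 1) f := by
    rw [coeff_pderiv', coeff_pderiv']
    have h0 : (((0 : Fin 3 →₀ ℕ) + Finsupp.single 1 1 : Fin 3 →₀ ℕ)) 0 = 0 := by
      simp [Finsupp.single_apply]
    rw [h0, show (0 : Fin 3 →₀ ℕ) + Finsupp.single 1 1 + Finsupp.single 0 1
        = ee 0 1 + ee 1 1 by rw [zero_add, add_comm]; rfl]
    simp
  have key5 : coeff 0 (pderiv 2 (pderiv 1 (pderiv 0 f)))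
      = coeff (ee 0 1 + ee 1 1 + ee 2 1) f := by
    rw [coeff_pderiv', coeff_pderiv', coeff_pderiv']
    have h0 : (((0 : Fin 3 →₀ ℕ) + Finsupp.single 2 1 : Fin 3 →₀ ℕ)) 1 = 0 := by
      simp [Finsupp.single_apply]
    have h0' : (((0 : Fin 3 →₀ ℕ) + Finsupp.single 2 1 + Finsupp.single 1 1 : Fin 3 →₀ ℕ)) 0 = 0 := by
      simp [Finsupp.single_apply]
    rw [h0, h0', show (0 : Fin 3 →₀ ℕ) + Finsupp.single 2 1 + Finsupp.single 1 1
        + Finsupp.single 0 1 = ee 0 1 + ee 1 1 + ee 2 1 by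
      rw [zero_add]; ext j; fin_cases j <;> simp [ee, Finsupp.single_apply]]
    simp
  -- membership in the maximal ideal is vanishing of the constant coefficient
  have hmax : ∀ g : R, g ∈ Ideal.span {x, y, z} ↔ coeff 0 g = 0 := by
    intro g
    rw [show ({x, y, z} : Set R) = X '' {0, 1, 2} by simp [Set.image_insert_eq]; rfl,
      mem_ideal_span_X_image]
    constructor
    · intro h
      by_contra hc
      obtain ⟨i, _, hne⟩ := h 0 (mem_support_iff.mpr hc)
      simp at hne
    · intro h m hm
      by_contra hno
      push_neg at hno
      have hz : m = 0 := by
        ext j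
        fin_cases j
        · simpa using hno 0 (by simp)
        · simpa using hno 1 (by simp)
        · simpa using hno 2 (by simp)
      rw [mem_support_iff, hz] at hm
      exact hm h
  -- condition 3
  have h3 : pderiv 0 f ∈ Ideal.span {x, y} ↔ ∀ c, coeff (ee 0 1 + ee 2 c) f = 0 := by
    rw [show ({x, y} : Set R) = X '' {0, 1} by simp [Set.image_insert_eq]; rfl,
      mem_ideal_span_X_image]
    constructor
    · intro h c
      by_contra hc
      have hsup : ee 2 c ∈ (pderiv 0 f).support := by
        rw [mem_support_iff, key3]; exact hc
      obtain ⟨i, hi, hne⟩ := h _ hsup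
      simp only [Set.mem_insert_iff, Set.mem_singleton_iff] at hi
      rcases hi with rfl | rfl <;> simp [ee, Finsupp.single_apply] at hne
    · intro h m hm
      by_contra hno
      push_neg at hno
      have h0 : m 0 = 0 := hno 0 (by simp)
      have h1' : m 1 = 0 := hno 1 (by simp)
      have hmeq : m = ee 2 (m 2) := by
        ext j
        fin_cases j <;> simp [ee, Finsupp.single_apply, h0, h1']
      rw [mem_support_iff, hmeq, key3] at hm
      exact hm (h _)
  have h4 : pderiv 1 (pderiv 0 f) ∈ Ideal.span {x, y, z} ↔
      coeff (ee 0 1 + ee 1 1) f = 0 := by rw [hmax, key4]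
  have h5 : pderiv 2 (pderiv 1 (pderiv 0 f)) ∈ Ideal.span {x, y, z} ↔
      coeff (ee 0 1 + ee 1 1 + ee 2 1) f = 0 := by rw [hmax, key5]
  rw [hI, h1, h2, h3, h4, h5]
  constructor
  · -- forward direction
    intro hf
    refine ⟨?_, ?_, ?_, ?_, ?_⟩
    · intro m hm
      obtain ⟨si, hsi, hle⟩ := hf m hm
      have := Finsupp.le_def.mp hle 0
      simp only [Set.mem_insert_iff, Set.mem_singleton_iff] at hsi
      rcases hsi with rfl | rfl | rfl | rfl <;>
        simp [ee, Finsupp.single_apply] at this <;> omega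
    · intro m hm
      obtain ⟨si, hsi, hle⟩ := hf m hm
      have t1 := Finsupp.le_def.mp hle 1
      have t2 := Finsupp.le_def.mp hle 2
      simp only [Set.mem_insert_iff, Set.mem_singleton_iff] at hsi
      rcases hsi with rfl | rfl | rfl | rfl <;>
        simp [ee, Finsupp.single_apply] at t1 t2 <;> omega
    · intro c
      by_contra hc
      obtain ⟨si, hsi, hle⟩ := hf _ (mem_support_iff.mpr hc)
      have t0 := Finsupp.le_def.mp hle 0
      have t1 := Finsupp.le_def.mp hle 1
      simp only [Set.mem_insert_iff, Set.mem_singleton_iff] at hsi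
      rcases hsi with rfl | rfl | rfl | rfl <;>
        simp [ee, Finsupp.single_apply] at t0 t1 <;> omega
    · by_contra hc
      obtain ⟨si, hsi, hle⟩ := hf _ (mem_support_iff.mpr hc)
      have t0 := Finsupp.le_def.mp hle 0
      have t1 := Finsupp.le_def.mp hle 1
      have t2 := Finsupp.le_def.mp hle 2
      simp only [Set.mem_insert_iff, Set.mem_singleton_iff] at hsi
      rcases hsi with rfl | rfl | rfl | rfl <;>
        simp [ee, Finsupp.single_apply] at t0 t1 t2 <;> omega
    · by_contra hc
      obtain ⟨si, hsi, hle⟩ := hf _ (mem_support_iff.mpr hc)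
      have t0 := Finsupp.le_def.mp hle 0
      have t1 := Finsupp.le_def.mp hle 1
      have t2 := Finsupp.le_def.mp hle 2
      simp only [Set.mem_insert_iff, Set.mem_singleton_iff] at hsi
      rcases hsi with rfl | rfl | rfl | rfl <;>
        simp [ee, Finsupp.single_apply] at t0 t1 t2 <;> omega
  · -- backward direction
    rintro ⟨c1, c2, c3, c4, c5⟩ m hm
    have ha : m 0 ≠ 0 := c1 m hm
    have hbc : m 1 ≠ 0 ∨ m 2 ≠ 0 := c2 m hm
    have hcoeff : coeff m f ≠ 0 := mem_support_iff.mp hm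
    by_cases hb0 : m 1 = 0
    · have hc0 : m 2 ≠ 0 := hbc.resolve_left (fun h => h hb0)
      rcases Nat.lt_or_ge (m 0) 2 with hlt | hge
      · exfalso
        apply hcoeff
        have hmeq : m = ee 0 1 + ee 2 (m 2) := by
          ext j
          fin_cases j <;> simp [ee, Finsupp.single_apply, hb0] <;> omega
        rw [hmeq]
        exact c3 _
      · exact ⟨ee 0 2 + ee 2 1, Set.mem_insert_of_mem _ (Set.mem_insert _ _),
          Finsupp.le_def.mpr fun j => by
            fin_cases j <;> simp [ee, Finsupp.single_apply] <;> omega⟩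
    · by_cases hb1 : m 1 = 1
      · by_cases hc0 : m 2 = 0
        · rcases Nat.lt_or_ge (m 0) 2 with hlt | hge
          · exfalso
            apply hcoeff
            have hmeq : m = ee 0 1 + ee 1 1 := by
              ext j
              fin_cases j <;> simp [ee, Finsupp.single_apply, hb1, hc0] <;> omega
            rw [hmeq]; exact c4
          · exact ⟨ee 0 2 + ee 1 1, Set.mem_insert _ _,
              Finsupp.le_def.mpr fun j => by
                fin_cases j <;> simp [ee, Finsupp.single_apply] <;> omega⟩
        · by_cases hc1 : m 2 = 1
          · rcases Nat.lt_or_ge (m 0) 2 with hlt | hge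
            · exfalso
              apply hcoeff
              have hmeq : m = ee 0 1 + ee 1 1 + ee 2 1 := by
                ext j
                fin_cases j <;> simp [ee, Finsupp.single_apply, hb1, hc1] <;> omega
              rw [hmeq]; exact c5
            · exact ⟨ee 0 2 + ee 1 1, Set.mem_insert _ _,
                Finsupp.le_def.mpr fun j => by
                  fin_cases j <;> simp [ee, Finsupp.single_apply] <;> omega⟩
          · -- m 2 ≥ 2
            exact ⟨ee 0 1 + ee 1 1 + ee 2 2, Set.mem_insert_of_mem _ (Set.mem_insert_of_mem _ (Set.mem_insert_of_mem _ rfl)),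
              Finsupp.le_def.mpr fun j => by
                fin_cases j <;> simp [ee, Finsupp.single_apply] <;> omega⟩
      · -- m 1 ≥ 2
        exact ⟨ee 0 1 + ee 1 2, Set.mem_insert_of_mem _ (Set.mem_insert_of_mem _ (Set.mem_insert _ _)),
          Finsupp.le_def.mpr fun j => by
            fin_cases j <;> simp [ee, Finsupp.single_apply] <;> omega⟩
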